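/- Let α, β be positive integers and q a variable. Define Ê_{n,k}(α,β,q) = Σ over permutations σ of {1,…,n+1} with exactly k descents of [α]^(lrmin(σ)-1)·[β]^(rlmin(σ)-1)·q^(m̃aj(σ)), where m̃aj(σ) = (1+des(σ)-lrmin(σ))(α-1) + (n+1-rlmin(σ))(β-1) + maj(σ). Then for n ≥ 1 and 0 ≤ k ≤ n, Ê_{n,k}(α,β,q) = q^(β+k-1)·[n-k+α]·Ê_{n-1,k-1}(α,β,q) + [k+β]·Ê_{n-1,k}(α,β,q), with the convention Ê_{n-1,-1} = 0. -/

import Mathlib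

open Finset

def pval {n : ℕ} (σ : Equiv.Perm (Fin n)) (i : ℕ) : ℕ :=
  if h : i < n then (σ ⟨i, h⟩ : ℕ) else 0

def desSet {n : ℕ} (σ : Equiv.Perm (Fin n)) : Finset ℕ :=
  (Finset.range (n - 1)).filter (fun i => pval σ (i + 1) < pval σ i)

def des {n : ℕ} (σ : Equiv.Perm (Fin n)) : ℕ := (desSet σ).card

def maj {n : ℕ} (σ : Equiv.Perm (Fin n)) : ℕ := ∑ i ∈ desSet σ, (i + 1)

def lrmin {n : ℕ} (σ : Equiv.Perm (Fin n)) : ℕ :=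
  ((Finset.range n).filter (fun i => ∀ j ∈ Finset.range i, pval σ i < pval σ j)).card

def rlmin {n : ℕ} (σ : Equiv.Perm (Fin n)) : ℕ :=
  ((Finset.range n).filter
    (fun i => ∀ j ∈ Finset.range n, i < j → pval σ i < pval σ j)).card

noncomputable section

abbrev K : Type := RatFunc ℚ

def qq : K := RatFunc.X

def qint (m : ℕ) : K := ∑ i ∈ Finset.range m, qq ^ i

def qfact (m : ℕ) : K := ∏ i ∈ Finset.range m, qint (i + 1)

def qbinom (a b : ℕ) : K := qfact a / (qfact b * qfact (a - b))

def E (α β : ℕ) : ℕ → ℕ → K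
  | 0, k => if k = 0 then 1 else 0
  | n + 1, 0 => qint β * E α β n 0
  | n + 1, k + 1 =>
      qq ^ (β + k) * qint (n - k + α) * E α β n k + qint (k + 1 + β) * E α β n (k + 1)

def poch (N : ℕ) : PowerSeries K :=
  ∏ i ∈ Finset.range N, (1 - PowerSeries.C (R := K) (qq ^ i) * PowerSeries.X)

def tmaj {m : ℕ} (α β : ℕ) (σ : Equiv.Perm (Fin m)) : ℕ :=
  (1 + des σ - lrmin σ) * (α - 1) + (m - rlmin σ) * (β - 1) + maj σ

def Ehat (α β n k : ℕ) : K :=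
  ∑ σ ∈ (Finset.univ : Finset (Equiv.Perm (Fin (n + 1)))).filter (fun σ => des σ = k),
    qint α ^ (lrmin σ - 1) * qint β ^ (rlmin σ - 1) * qq ^ (tmaj α β σ)

-- ============ auxiliary development ============

lemma pval_lt {n : ℕ} (τ : Equiv.Perm (Fin n)) {i : ℕ} (h : i < n) : pval τ i < n := by
  simp [pval, h]

lemma pval_eq_zero {n : ℕ} (τ : Equiv.Perm (Fin n)) {i : ℕ} (h : ¬ i < n) : pval τ i = 0 := by
  simp [pval, h]

def insFun {n : ℕ} (τ : Equiv.Perm (Fin n)) (p : Fin (n + 1)) (i : Fin (n + 1)) : Fin (n + 1) :=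
  if h : (i : ℕ) < (p : ℕ) then
    Fin.castSucc (τ ⟨i, by have := p.isLt; omega⟩)
  else if h2 : (i : ℕ) = (p : ℕ) then Fin.last n
  else Fin.castSucc (τ ⟨(i : ℕ) - 1, by have := i.isLt; omega⟩)

lemma insFun_injective {n : ℕ} (τ : Equiv.Perm (Fin n)) (p : Fin (n + 1)) :
    Function.Injective (insFun τ p) := by
  have key : ∀ a b : Fin n, Fin.castSucc (τ a) = Fin.castSucc (τ b) → (a : ℕ) = (b : ℕ) := by
    intro a b h
    exact congrArg Fin.val (τ.injective (Fin.castSucc_injective n h))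
  have hne : ∀ a : Fin n, Fin.castSucc (τ a) ≠ Fin.last n := by
    intro a h
    have h1 : ((Fin.castSucc (τ a)) : ℕ) = n := by rw [h]; simp
    have h2 : ((Fin.castSucc (τ a)) : ℕ) < n := by simpa using (τ a).isLt
    omega
  intro i j hij
  unfold insFun at hij
  split_ifs at hij with h1 h2 h3 h4 h5 h6 h7 h8
  · have := key _ _ hij; simp at this; exact Fin.ext this
  · exact absurd hij (hne _)
  · have := key _ _ hij; simp at this; exact absurd this (by omega)
  · exact absurd hij.symm (hne _)
  · exact Fin.ext (by omega)
  · exact absurd hij.symm (hne _)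
  · have := key _ _ hij; simp at this; exact absurd this (by omega)
  · exact absurd hij (hne _)
  · have := key _ _ hij; simp at this; exact Fin.ext (by omega)

def ins {n : ℕ} (τ : Equiv.Perm (Fin n)) (p : Fin (n + 1)) : Equiv.Perm (Fin (n + 1)) :=
  Equiv.ofBijective (insFun τ p) (Finite.injective_iff_bijective.mp (insFun_injective τ p))

lemma ins_apply {n : ℕ} (τ : Equiv.Perm (Fin n)) (p : Fin (n + 1)) (i : Fin (n + 1)) :
    ins τ p i = insFun τ p i := rfl

lemma pval_ins {n : ℕ} (τ : Equiv.Perm (Fin n)) (p : Fin (n + 1)) (i : ℕ) :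
    pval (ins τ p) i =
      if i < (p : ℕ) then pval τ i
      else if i = (p : ℕ) then n
      else if i < n + 1 then pval τ (i - 1)
      else 0 := by
  by_cases h : i < n + 1
  · have hh : pval (ins τ p) i = ((insFun τ p ⟨i, h⟩ : Fin (n+1)) : ℕ) := by
      simp [pval, h, ins_apply]
    rw [hh]
    unfold insFun
    rcases lt_trichotomy i (p : ℕ) with hc | hc | hc
    · have hi : i < n := by omega
      simp [hc, pval, hi]
    · simp [hc, pval]
    · have h1 : ¬ i < (p : ℕ) := by omega
      have h2 : ¬ i = (p : ℕ) := by omega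
      have h3 : i - 1 < n := by omega
      simp [h1, h2, h, pval, h3]
  · have h1 : ¬ i < (p : ℕ) := by omega
    have h2 : ¬ i = (p : ℕ) := by omega
    simp [pval, h, h1, h2]

lemma mem_desSet {n : ℕ} (σ : Equiv.Perm (Fin n)) (j : ℕ) :
    j ∈ desSet σ ↔ j < n - 1 ∧ pval σ (j + 1) < pval σ j := by
  simp [desSet, Finset.mem_filter, Finset.mem_range]

lemma mem_desSet_ins {n : ℕ} (τ : Equiv.Perm (Fin n)) (p : Fin (n + 1)) (j : ℕ) :
    j ∈ desSet (ins τ p) ↔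
      (j + 1 < (p : ℕ) ∧ j ∈ desSet τ) ∨ (j = (p : ℕ) ∧ j < n) ∨
        ((p : ℕ) < j ∧ j < n ∧ j - 1 ∈ desSet τ) := by
  have hp := p.isLt
  rw [mem_desSet]
  simp only [Nat.add_sub_cancel, mem_desSet]
  rw [pval_ins, pval_ins]
  rcases lt_trichotomy (j + 1) (p : ℕ) with hc | hc | hc
  · have h1 : j < (p : ℕ) := by omega
    simp only [if_pos hc, if_pos h1]
    constructor
    · rintro ⟨h2, h3⟩; exact Or.inl ⟨hc, by omega, h3⟩
    · rintro (⟨h2, h3⟩ | ⟨h2, h3⟩ | ⟨h2, h3, h4⟩)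
      · exact ⟨by omega, h3.2⟩
      · omega
      · omega
  · -- j + 1 = p : never a descent
    have h1 : j < (p : ℕ) := by omega
    have h2 : ¬ (j + 1 < (p : ℕ)) := by omega
    simp only [if_neg h2, if_pos hc, if_pos h1]
    constructor
    · rintro ⟨h3, h4⟩
      exact absurd h4 (by have := pval_lt τ (show j < n by omega); omega)
    · rintro (⟨h3, h4⟩ | ⟨h3, h4⟩ | ⟨h3, h4, h5⟩) <;> omega
  · rcases lt_trichotomy j (p : ℕ) with hd | hd | hd
    · omega
    · -- j = p
      have h2 : ¬ (j + 1 < (p : ℕ)) := by omega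
      have h3 : ¬ (j + 1 = (p : ℕ)) := by omega
      have h4 : ¬ (j < (p : ℕ)) := by omega
      simp only [if_neg h2, if_neg h3, if_neg h4, if_pos hd]
      constructor
      · rintro ⟨h5, h6⟩
        exact Or.inr (Or.inl ⟨hd, by omega⟩)
      · rintro (⟨h5, h6⟩ | ⟨h5, h6⟩ | ⟨h5, h6, h7⟩)
        · omega
        · have h7 : j + 1 < n + 1 := by omega
          simp only [if_pos h7, Nat.add_sub_cancel]
          exact ⟨by omega, pval_lt τ (by omega)⟩
        · omega
    · -- p < j
      have h2 : ¬ (j + 1 < (p : ℕ)) := by omega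
      have h3 : ¬ (j + 1 = (p : ℕ)) := by omega
      have h4 : ¬ (j < (p : ℕ)) := by omega
      have h5 : ¬ (j = (p : ℕ)) := by omega
      simp only [if_neg h2, if_neg h3, if_neg h4, if_neg h5, Nat.add_sub_cancel]
      by_cases h6 : j + 1 < n + 1
      · have h7 : j < n + 1 := by omega
        simp only [if_pos h6, if_pos h7]
        constructor
        · rintro ⟨h8, h9⟩
          exact Or.inr (Or.inr ⟨hd, by omega, by omega,
            by rw [show j - 1 + 1 = j from by omega]; exact h9⟩)
        · rintro (⟨h8, h9⟩ | ⟨h8, h9⟩ | ⟨h8, h9, h10⟩)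
          · omega
          · omega
          · have h11 := h10.2
            rw [show j - 1 + 1 = j from by omega] at h11
            exact ⟨by omega, h11⟩
      · simp only [if_neg h6]
        constructor
        · rintro ⟨h8, h9⟩; omega
        · rintro (⟨h8, h9⟩ | ⟨h8, h9⟩ | ⟨h8, h9, h10⟩) <;> omega

lemma pval_ins_lt {n : ℕ} (τ : Equiv.Perm (Fin n)) (p : Fin (n + 1)) {i : ℕ}
    (h : i < (p : ℕ)) : pval (ins τ p) i = pval τ i := by
  rw [pval_ins]; simp [h]

lemma pval_ins_self {n : ℕ} (τ : Equiv.Perm (Fin n)) (p : Fin (n + 1)) :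
    pval (ins τ p) (p : ℕ) = n := by
  rw [pval_ins]; simp

lemma pval_ins_gt {n : ℕ} (τ : Equiv.Perm (Fin n)) (p : Fin (n + 1)) {i : ℕ}
    (h1 : (p : ℕ) < i) (h2 : i ≤ n) : pval (ins τ p) i = pval τ (i - 1) := by
  rw [pval_ins]
  have c1 : ¬ i < (p : ℕ) := by omega
  have c2 : ¬ i = (p : ℕ) := by omega
  have c3 : i < n + 1 := by omega
  simp [c1, c2, c3]

lemma lrmin_ins {n : ℕ} (τ : Equiv.Perm (Fin n)) (p : Fin (n + 1)) :
    lrmin (ins τ p) = lrmin τ + (if (p : ℕ) = 0 then 1 else 0) := by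
  have hp := p.isLt
  classical
  set L := (Finset.range n).filter (fun i => ∀ j ∈ Finset.range i, pval τ i < pval τ j) with hL
  have hset : (Finset.range (n + 1)).filter
        (fun i => ∀ j ∈ Finset.range i, pval (ins τ p) i < pval (ins τ p) j)
      = L.image (fun i => if i < (p : ℕ) then i else i + 1) ∪
        (if (p : ℕ) = 0 then {0} else ∅) := by
    ext i
    simp only [mem_filter, mem_range, mem_union, mem_image, hL]
    constructor
    · rintro ⟨hi, hall⟩
      rcases lt_trichotomy i (p : ℕ) with hc | hc | hc
      · refine Or.inl ⟨i, ⟨⟨by omega, ?_⟩, by simp [hc]⟩⟩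
        intro j hj
        have := hall j hj
        rwa [pval_ins_lt τ p hc, pval_ins_lt τ p (by omega)] at this
      · by_cases hp0 : (p : ℕ) = 0
        · exact Or.inr (by simp [hp0, hc])
        · exfalso
          have h0 := hall 0 (by omega)
          rw [hc, pval_ins_self, pval_ins_lt τ p (by omega)] at h0
          have := pval_lt τ (show 0 < n by omega)
          omega
      · refine Or.inl ⟨i - 1, ⟨⟨by omega, ?_⟩, by rw [if_neg (by omega)]; omega⟩⟩
        intro j hj
        have hi1 : pval (ins τ p) i = pval τ (i - 1) := pval_ins_gt τ p hc (by omega)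
        by_cases hjp : j < (p : ℕ)
        · have := hall j (by omega)
          rwa [hi1, pval_ins_lt τ p hjp] at this
        · have := hall (j + 1) (by omega)
          rw [hi1, pval_ins_gt τ p (by omega) (by omega)] at this
          simpa using this
    · rintro (⟨i', ⟨⟨hi'n, hi'all⟩, hfi⟩⟩ | hin)
      · by_cases hc : i' < (p : ℕ)
        · rw [if_pos hc] at hfi
          subst hfi
          refine ⟨by omega, fun j hj => ?_⟩
          rw [pval_ins_lt τ p hc, pval_ins_lt τ p (by omega)]
          exact hi'all j (by omega)
        · rw [if_neg hc] at hfi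
          subst hfi
          refine ⟨by omega, fun j hj => ?_⟩
          rw [pval_ins_gt τ p (by omega) (by omega)]
          simp only [Nat.add_sub_cancel]
          rcases lt_trichotomy j (p : ℕ) with hd | hd | hd
          · rw [pval_ins_lt τ p hd]
            exact hi'all j (by omega)
          · rw [hd, pval_ins_self]
            exact pval_lt τ (by omega)
          · rw [pval_ins_gt τ p hd (by omega)]
            exact hi'all (j - 1) (by omega)
      · have hp0 : (p : ℕ) = 0 ∧ i = 0 := by
          by_cases h : (p : ℕ) = 0 <;> simp [h] at hin <;> tauto
        refine ⟨by omega, fun j hj => ?_⟩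
        omega
  have hinj : Set.InjOn (fun i => if i < (p : ℕ) then i else i + 1) L := by
    intro a _ b _ hab
    simp only at hab
    split_ifs at hab <;> omega
  rw [lrmin, hset, Finset.card_union_of_disjoint, Finset.card_image_of_injOn hinj]
  · congr 1
    split_ifs <;> simp
  · rw [Finset.disjoint_right]
    intro a ha hmem
    by_cases h : (p : ℕ) = 0
    · simp [h] at ha
      simp only [mem_image] at hmem
      obtain ⟨b, _, hb⟩ := hmem
      rw [if_neg (by omega)] at hb
      omega
    · simp [h] at ha

lemma rlmin_ins {n : ℕ} (τ : Equiv.Perm (Fin n)) (p : Fin (n + 1)) :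
    rlmin (ins τ p) = rlmin τ + (if (p : ℕ) = n then 1 else 0) := by
  have hp := p.isLt
  classical
  set R := (Finset.range n).filter
      (fun i => ∀ j ∈ Finset.range n, i < j → pval τ i < pval τ j) with hR
  have hset : rlmin (ins τ p)
      = (R.image (fun i => if i < (p : ℕ) then i else i + 1) ∪
        (if (p : ℕ) = n then {n} else ∅)).card := by
    rw [rlmin]
    congr 1
    ext i
    simp only [mem_filter, mem_range, mem_union, mem_image, hR]
    constructor
    · rintro ⟨hi, hall⟩
      rcases lt_trichotomy i (p : ℕ) with hc | hc | hc
      · refine Or.inl ⟨i, ⟨⟨by omega, ?_⟩, by simp [hc]⟩⟩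
        intro j hj hij
        by_cases hjp : j < (p : ℕ)
        · have := hall j (by omega) hij
          rwa [pval_ins_lt τ p hc, pval_ins_lt τ p hjp] at this
        · have := hall (j + 1) (by omega) (by omega)
          rw [pval_ins_lt τ p hc, pval_ins_gt τ p (by omega) (by omega)] at this
          simpa using this
      · by_cases hpn : (p : ℕ) = n
        · exact Or.inr (by simp [hpn, hc, hpn ▸ hc])
        · exfalso
          have h0 := hall ((p : ℕ) + 1) (by omega) (by omega)
          rw [hc, pval_ins_self, pval_ins_gt τ p (by omega) (by omega)] at h0
          simp only [Nat.add_sub_cancel] at h0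
          have := pval_lt τ (show (p : ℕ) < n by omega)
          omega
      · refine Or.inl ⟨i - 1, ⟨⟨by omega, ?_⟩, by rw [if_neg (by omega)]; omega⟩⟩
        intro j hj hij
        have := hall (j + 1) (by omega) (by omega)
        rw [pval_ins_gt τ p hc (by omega), pval_ins_gt τ p (by omega) (by omega)] at this
        simpa using this
    · rintro (⟨i', ⟨⟨hi'n, hi'all⟩, hfi⟩⟩ | hin)
      · by_cases hc : i' < (p : ℕ)
        · rw [if_pos hc] at hfi
          subst hfi
          refine ⟨by omega, fun j hj hij => ?_⟩
          rw [pval_ins_lt τ p hc]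
          rcases lt_trichotomy j (p : ℕ) with hd | hd | hd
          · rw [pval_ins_lt τ p hd]
            exact hi'all j (by omega) hij
          · rw [hd, pval_ins_self]
            exact pval_lt τ (by omega)
          · rw [pval_ins_gt τ p hd (by omega)]
            exact hi'all (j - 1) (by omega) (by omega)
        · rw [if_neg hc] at hfi
          subst hfi
          refine ⟨by omega, fun j hj hij => ?_⟩
          rw [pval_ins_gt τ p (by omega) (by omega),
            pval_ins_gt τ p (by omega) (by omega)]
          simp only [Nat.add_sub_cancel]
          exact hi'all (j - 1) (by omega) (by omega)
      · have hpn : (p : ℕ) = n ∧ i = n := by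
          by_cases h : (p : ℕ) = n <;> simp [h] at hin <;> tauto
        exact ⟨by omega, fun j hj hij => by omega⟩
  have hinj : Set.InjOn (fun i => if i < (p : ℕ) then i else i + 1) R := by
    intro a _ b _ hab
    simp only at hab
    split_ifs at hab <;> omega
  rw [hset, Finset.card_union_of_disjoint, Finset.card_image_of_injOn hinj]
  · congr 1
    split_ifs <;> simp
  · rw [Finset.disjoint_right]
    intro a ha hmem
    by_cases h : (p : ℕ) = n
    · simp [h] at ha
      simp only [mem_image] at hmem
      obtain ⟨b, hb1, hb2⟩ := hmem
      simp only [hR, mem_filter, mem_range] at hb1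
      split_ifs at hb2 <;> omega
    · simp [h] at ha

lemma desSet_ins_eq {n : ℕ} (τ : Equiv.Perm (Fin n)) (p : Fin (n + 1)) :
    desSet (ins τ p) =
      ((desSet τ).filter (fun j => j + 1 < (p : ℕ))) ∪
        ((if (p : ℕ) < n then {(p : ℕ)} else ∅) ∪
          ((desSet τ).filter (fun j => (p : ℕ) ≤ j)).image (fun j => j + 1)) := by
  have hp := p.isLt
  ext j
  rw [mem_desSet_ins]
  simp only [mem_union, mem_filter, mem_image]
  constructor
  · rintro (⟨h1, h2⟩ | ⟨h1, h2⟩ | ⟨h1, h2, h3⟩)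
    · exact Or.inl ⟨h2, h1⟩
    · subst h1
      exact Or.inr (Or.inl (by rw [if_pos h2]; simp))
    · exact Or.inr (Or.inr ⟨j - 1, ⟨h3, by omega⟩, by omega⟩)
  · rintro (⟨h1, h2⟩ | h1 | ⟨i, ⟨h1, h2⟩, h3⟩)
    · exact Or.inl ⟨h2, h1⟩
    · by_cases h : (p : ℕ) < n
      · rw [if_pos h] at h1
        simp only [mem_singleton] at h1
        exact Or.inr (Or.inl ⟨h1, by omega⟩)
      · rw [if_neg h] at h1
        simp at h1
    · have h4 := (mem_desSet τ i).mp h1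
      refine Or.inr (Or.inr ⟨by omega, by omega, ?_⟩)
      rw [show j - 1 = i from by omega]
      exact h1

lemma des_ins {n : ℕ} (τ : Equiv.Perm (Fin n)) (p : Fin (n + 1)) :
    des (ins τ p) = ((desSet τ).filter (fun j => j + 1 < (p : ℕ))).card +
      ((if (p : ℕ) < n then 1 else 0) +
        ((desSet τ).filter (fun j => (p : ℕ) ≤ j)).card) := by
  have hd2 : Disjoint (if (p : ℕ) < n then ({(p : ℕ)} : Finset ℕ) else ∅)
      (((desSet τ).filter (fun j => (p : ℕ) ≤ j)).image (fun j => j + 1)) := by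
    rw [Finset.disjoint_left]
    intro a ha hb
    simp only [mem_image, mem_filter] at hb
    obtain ⟨b, ⟨_, hb2⟩, hb3⟩ := hb
    split_ifs at ha <;> simp at ha <;> omega
  have hd1 : Disjoint ((desSet τ).filter (fun j => j + 1 < (p : ℕ)))
      ((if (p : ℕ) < n then ({(p : ℕ)} : Finset ℕ) else ∅) ∪
        ((desSet τ).filter (fun j => (p : ℕ) ≤ j)).image (fun j => j + 1)) := by
    rw [Finset.disjoint_left]
    intro a ha hb
    simp only [mem_filter] at ha
    simp only [mem_union, mem_image, mem_filter] at hb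
    rcases hb with hb | ⟨b, ⟨_, hb2⟩, hb3⟩
    · split_ifs at hb <;> simp at hb <;> omega
    · omega
  rw [des, desSet_ins_eq, Finset.card_union_of_disjoint hd1,
    Finset.card_union_of_disjoint hd2,
    Finset.card_image_of_injective _ (add_left_injective 1)]
  congr 2
  split_ifs <;> simp

lemma maj_ins {n : ℕ} (τ : Equiv.Perm (Fin n)) (p : Fin (n + 1)) :
    maj (ins τ p) = (∑ j ∈ (desSet τ).filter (fun j => j + 1 < (p : ℕ)), (j + 1)) +
      ((if (p : ℕ) < n then (p : ℕ) + 1 else 0) +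
        ∑ j ∈ (desSet τ).filter (fun j => (p : ℕ) ≤ j), (j + 2)) := by
  have hd2 : Disjoint (if (p : ℕ) < n then ({(p : ℕ)} : Finset ℕ) else ∅)
      (((desSet τ).filter (fun j => (p : ℕ) ≤ j)).image (fun j => j + 1)) := by
    rw [Finset.disjoint_left]
    intro a ha hb
    simp only [mem_image, mem_filter] at hb
    obtain ⟨b, ⟨_, hb2⟩, hb3⟩ := hb
    split_ifs at ha <;> simp at ha <;> omega
  have hd1 : Disjoint ((desSet τ).filter (fun j => j + 1 < (p : ℕ)))
      ((if (p : ℕ) < n then ({(p : ℕ)} : Finset ℕ) else ∅) ∪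
        ((desSet τ).filter (fun j => (p : ℕ) ≤ j)).image (fun j => j + 1)) := by
    rw [Finset.disjoint_left]
    intro a ha hb
    simp only [mem_filter] at ha
    simp only [mem_union, mem_image, mem_filter] at hb
    rcases hb with hb | ⟨b, ⟨_, hb2⟩, hb3⟩
    · split_ifs at hb <;> simp at hb <;> omega
    · omega
  rw [maj, desSet_ins_eq, Finset.sum_union hd1, Finset.sum_union hd2,
    Finset.sum_image (fun a _ b _ h => by omega : ∀ a ∈ _, ∀ b ∈ _, a + 1 = b + 1 → a = b)]
  congr 2
  · split_ifs <;> simp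

lemma lrmin_pos {n : ℕ} (hn : 0 < n) (τ : Equiv.Perm (Fin n)) : 1 ≤ lrmin τ := by
  rw [lrmin, Nat.succ_le_iff, Finset.card_pos]
  exact ⟨0, by simp [hn]⟩

lemma rlmin_pos {n : ℕ} (hn : 0 < n) (τ : Equiv.Perm (Fin n)) : 1 ≤ rlmin τ := by
  rw [rlmin, Nat.succ_le_iff, Finset.card_pos]
  refine ⟨n - 1, ?_⟩
  simp only [mem_filter, mem_range]
  exact ⟨by omega, fun j hj hij => by omega⟩

lemma rlmin_le {n : ℕ} (τ : Equiv.Perm (Fin n)) : rlmin τ ≤ n := by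
  rw [rlmin]
  calc _ ≤ (Finset.range n).card := Finset.card_filter_le _ _
  _ = n := Finset.card_range n

lemma lrmin_le_des_succ {n : ℕ} (τ : Equiv.Perm (Fin n)) : lrmin τ ≤ des τ + 1 := by
  rw [lrmin, des]
  set L := (Finset.range n).filter (fun i => ∀ j ∈ Finset.range i, pval τ i < pval τ j) with hL
  have hmap : ∀ i ∈ L.erase 0, i - 1 ∈ desSet τ := by
    intro i hi
    rw [Finset.mem_erase] at hi
    obtain ⟨hi0, hi2⟩ := hi
    simp only [hL, mem_filter, mem_range] at hi2
    rw [mem_desSet]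
    have h1 := hi2.2 (i - 1) (by simp; omega)
    rw [show i - 1 + 1 = i from by omega]
    exact ⟨by omega, h1⟩
  have hinj : Set.InjOn (fun i => i - 1) (L.erase 0) := by
    intro a ha b hb hab
    simp only [Finset.mem_coe, Finset.mem_erase] at ha hb
    simp only at hab
    omega
  have := Finset.card_le_card_of_injOn _ hmap hinj
  have h2 : L.card ≤ (L.erase 0).card + 1 := by
    by_cases h : 0 ∈ L
    · rw [Finset.card_erase_of_mem h]; omega
    · rw [Finset.erase_eq_of_notMem h]; omega
  omega

lemma desSet_subset {n : ℕ} (τ : Equiv.Perm (Fin n)) : desSet τ ⊆ Finset.range (n - 1) :=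
  Finset.filter_subset _ _

lemma des_le {n : ℕ} (τ : Equiv.Perm (Fin n)) : des τ ≤ n - 1 := by
  rw [des]
  calc _ ≤ (Finset.range (n-1)).card := Finset.card_le_card (desSet_subset τ)
  _ = n - 1 := Finset.card_range _

-- counting lemma
lemma sum_injOn_range {s : Finset ℕ} {f : ℕ → ℕ} (hinj : Set.InjOn f s)
    (hlt : ∀ p ∈ s, f p < s.card) (g : ℕ → K) :
    ∑ p ∈ s, g (f p) = ∑ i ∈ Finset.range s.card, g i := by
  have himg : s.image f = Finset.range s.card := by
    apply Finset.eq_of_subset_of_card_le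
    · intro a ha
      simp only [mem_image] at ha
      obtain ⟨b, hb, rfl⟩ := ha
      simp only [mem_range]
      exact hlt b hb
    · rw [Finset.card_range, Finset.card_image_of_injOn hinj]
  rw [← himg, Finset.sum_image (fun a ha b hb h => hinj ha hb h)]

lemma castSucc_ne_last {n : ℕ} (a : Fin n) : Fin.castSucc a ≠ Fin.last n := by
  intro h
  have h1 : ((Fin.castSucc a) : ℕ) = n := by rw [h]; simp
  have h2 := a.isLt
  simp only [Fin.coe_castSucc] at h1
  omega

lemma ins_injective {n : ℕ} :
    Function.Injective (fun tp : Equiv.Perm (Fin n) × Fin (n + 1) => ins tp.1 tp.2) := by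
  rintro ⟨τ, p⟩ ⟨τ', p'⟩ h
  simp only at h
  have happ : ∀ i, insFun τ p i = insFun τ' p' i := by
    intro i
    have := congrArg (fun e => (e : Equiv.Perm (Fin (n+1))) i) h
    simpa [ins_apply] using this
  have hlast : ∀ (ρ : Equiv.Perm (Fin n)) (r : Fin (n + 1)) (i : Fin (n + 1)),
      insFun ρ r i = Fin.last n ↔ (i : ℕ) = (r : ℕ) := by
    intro ρ r i
    unfold insFun
    split_ifs with h1 h2
    · exact iff_of_false (castSucc_ne_last _) (by omega)
    · simp [h2]
    · exact iff_of_false (castSucc_ne_last _) (by omega)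
  have hpp : p = p' := by
    have h1 := happ p
    have h2 : insFun τ p p = Fin.last n := (hlast τ p p).mpr rfl
    rw [h1] at h2
    exact Fin.ext ((hlast τ' p' p).mp h2)
  subst hpp
  have hττ : τ = τ' := by
    apply Equiv.ext
    intro x
    by_cases hx : (x : ℕ) < (p : ℕ)
    · have h1 := happ ⟨x, by omega⟩
      unfold insFun at h1
      simp only [dif_pos hx] at h1
      have := Fin.castSucc_injective n h1
      simpa using this
    · have hx1 : (x : ℕ) + 1 < n + 1 := by omega
      have h1 := happ ⟨(x : ℕ) + 1, hx1⟩
      unfold insFun at h1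
      have c1 : ¬ ((x : ℕ) + 1 < (p : ℕ)) := by omega
      have c2 : ¬ ((x : ℕ) + 1 = (p : ℕ)) := by omega
      simp only [dif_neg c1, dif_neg c2] at h1
      have := Fin.castSucc_injective n h1
      simpa using this
  rw [hττ]

lemma sum_perm_split {n : ℕ} (F : Equiv.Perm (Fin (n + 1)) → K) :
    ∑ σ : Equiv.Perm (Fin (n + 1)), F σ =
      ∑ τ : Equiv.Perm (Fin n), ∑ p : Fin (n + 1), F (ins τ p) := by
  have hbij : Function.Bijective
      (fun tp : Equiv.Perm (Fin n) × Fin (n + 1) => ins tp.1 tp.2) := by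
    rw [Fintype.bijective_iff_injective_and_card]
    refine ⟨ins_injective, ?_⟩
    simp only [Fintype.card_prod, Fintype.card_perm, Fintype.card_fin]
    rw [Nat.factorial_succ, mul_comm]
  calc ∑ σ : Equiv.Perm (Fin (n + 1)), F σ
      = ∑ tp : Equiv.Perm (Fin n) × Fin (n + 1), F (ins tp.1 tp.2) :=
        (Fintype.sum_bijective _ hbij _ _ (fun _ => rfl)).symm
    _ = ∑ τ : Equiv.Perm (Fin n), ∑ p : Fin (n + 1), F (ins τ p) :=
        Fintype.sum_prod_type (fun tp => F (ins tp.1 tp.2))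

lemma card_filter_lt_le {D : Finset ℕ} {s : ℕ} : (D.filter (fun j => j < s)).card ≤ s := by
  calc (D.filter (fun j => j < s)).card ≤ (Finset.range s).card := by
        apply Finset.card_le_card
        intro j hj
        simp only [mem_filter] at hj
        simp only [mem_range]
        exact hj.2
  _ = s := Finset.card_range s

lemma filter_split_card {D : Finset ℕ} {s : ℕ} (hs : s ∈ D) :
    (D.filter (fun j => j < s)).card + (1 + (D.filter (fun j => s < j)).card) = D.card := by
  have h1 := Finset.card_filter_add_card_filter_not (s := D) (p := fun j => j < s)
  have h2 : D.filter (fun j => ¬ j < s) = insert s (D.filter (fun j => s < j)) := by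
    ext j
    simp only [mem_filter, Finset.mem_insert]
    constructor
    · rintro ⟨hj1, hj2⟩
      rcases eq_or_lt_of_le (not_lt.mp hj2) with h | h
      · exact Or.inl h.symm
      · exact Or.inr ⟨hj1, h⟩
    · rintro (rfl | ⟨hj1, hj2⟩)
      · exact ⟨hs, by omega⟩
      · exact ⟨hj1, by omega⟩
  rw [h2] at h1
  rw [Finset.card_insert_of_notMem (by simp)] at h1
  omega

lemma filter_split_card' {D : Finset ℕ} {s : ℕ} (hs : s ∉ D) :
    (D.filter (fun j => j < s)).card + (D.filter (fun j => s < j)).card = D.card := by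
  have h1 := Finset.card_filter_add_card_filter_not (s := D) (p := fun j => j < s)
  have h2 : D.filter (fun j => ¬ j < s) = D.filter (fun j => s < j) := by
    apply Finset.filter_congr
    intro x hx
    constructor <;> intro h
    · rcases eq_or_lt_of_le (not_lt.mp h) with h' | h'
      · exact absurd (h' ▸ hx) hs
      · exact h'
    · omega
  rw [h2] at h1
  omega

lemma filter_split_sum {D : Finset ℕ} {s : ℕ} (hs : s ∈ D) (f : ℕ → ℕ) :
    (∑ j ∈ D.filter (fun j => j < s), f j) + (f s + ∑ j ∈ D.filter (fun j => s < j), f j)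
      = ∑ j ∈ D, f j := by
  have h1 := Finset.sum_filter_add_sum_filter_not D (fun j => j < s) f
  have h2 : D.filter (fun j => ¬ j < s) = insert s (D.filter (fun j => s < j)) := by
    ext j
    simp only [mem_filter, Finset.mem_insert]
    constructor
    · rintro ⟨hj1, hj2⟩
      rcases eq_or_lt_of_le (not_lt.mp hj2) with h | h
      · exact Or.inl h.symm
      · exact Or.inr ⟨hj1, h⟩
    · rintro (rfl | ⟨hj1, hj2⟩)
      · exact ⟨hs, by omega⟩
      · exact ⟨hj1, by omega⟩
  rw [h2, Finset.sum_insert (by simp)] at h1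
  omega

lemma filter_split_sum' {D : Finset ℕ} {s : ℕ} (hs : s ∉ D) (f : ℕ → ℕ) :
    (∑ j ∈ D.filter (fun j => j < s), f j) + (∑ j ∈ D.filter (fun j => s < j), f j)
      = ∑ j ∈ D, f j := by
  have h1 := Finset.sum_filter_add_sum_filter_not D (fun j => j < s) f
  have h2 : D.filter (fun j => ¬ j < s) = D.filter (fun j => s < j) := by
    apply Finset.filter_congr
    intro x hx
    constructor <;> intro h
    · rcases eq_or_lt_of_le (not_lt.mp h) with h' | h'
      · exact absurd (h' ▸ hx) hs
      · exact h'
    · omega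
  rw [h2] at h1
  omega

lemma gS_lt_of_mem {D : Finset ℕ} {s : ℕ} (hs : s ∈ D) :
    (D.filter (fun j => s < j)).card < D.card := by
  have := filter_split_card hs
  omega

lemma gS_anti {D : Finset ℕ} {a b : ℕ} (ha : a ∈ D) (hb : b ∈ D) (hab : a < b) :
    (D.filter (fun j => b < j)).card < (D.filter (fun j => a < j)).card := by
  have hsub : insert b (D.filter (fun j => b < j)) ⊆ D.filter (fun j => a < j) := by
    intro j hj
    simp only [Finset.mem_insert, mem_filter] at hj ⊢
    rcases hj with rfl | ⟨hj1, hj2⟩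
    · exact ⟨hb, hab⟩
    · exact ⟨hj1, by omega⟩
  have := Finset.card_le_card hsub
  rw [Finset.card_insert_of_notMem (by simp)] at this
  omega

lemma sum_D_pow {D : Finset ℕ} :
    ∑ s ∈ D, qq ^ (D.filter (fun j => s < j)).card = ∑ i ∈ Finset.range D.card, qq ^ i := by
  apply sum_injOn_range (f := fun s => (D.filter (fun j => s < j)).card)
  · intro x hx y hy hxy
    simp only [Finset.mem_coe] at hx hy
    have hxy' : (D.filter (fun j => x < j)).card = (D.filter (fun j => y < j)).card := hxy
    rcases lt_trichotomy x y with h | h | h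
    · exact absurd hxy' (by have := gS_anti hx hy h; omega)
    · exact h
    · exact absurd hxy' (by have := gS_anti hy hx h; omega)
  · intro s hs
    exact gS_lt_of_mem hs

lemma gS_le_out {N : ℕ} {D : Finset ℕ} (hD : D ⊆ Finset.range N) (s : ℕ) :
    (D.filter (fun j => s < j)).card ≤ N - s - 1 := by
  calc (D.filter (fun j => s < j)).card ≤ (Finset.Ioo s N).card := by
        apply Finset.card_le_card
        intro j hj
        simp only [mem_filter] at hj
        have := hD hj.1
        simp only [mem_range] at this
        simp only [Finset.mem_Ioo]
        exact ⟨hj.2, this⟩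
  _ = N - s - 1 := by rw [Nat.card_Ioo]
  
lemma gS_diff {D : Finset ℕ} {x y : ℕ} (hy : y ∉ D) (hxy : x < y) :
    (D.filter (fun j => x < j)).card ≤ (D.filter (fun j => y < j)).card + (y - x - 1) := by
  have hsub : D.filter (fun j => x < j) ⊆ D.filter (fun j => y < j) ∪ Finset.Ioo x y := by
    intro j hj
    simp only [mem_filter] at hj
    simp only [Finset.mem_union, mem_filter, Finset.mem_Ioo]
    rcases lt_or_ge y j with h | h
    · exact Or.inl ⟨hj.1, h⟩
    · rcases eq_or_lt_of_le h with h' | h'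
      · exact absurd (h' ▸ hj.1) hy
      · exact Or.inr ⟨hj.2, h'⟩
  calc (D.filter (fun j => x < j)).card
      ≤ (D.filter (fun j => y < j) ∪ Finset.Ioo x y).card := Finset.card_le_card hsub
    _ ≤ (D.filter (fun j => y < j)).card + (Finset.Ioo x y).card := Finset.card_union_le _ _
    _ = (D.filter (fun j => y < j)).card + (y - x - 1) := by rw [Nat.card_Ioo]

lemma sum_notD_pow {N : ℕ} {D : Finset ℕ} (hD : D ⊆ Finset.range N) :
    ∑ s ∈ Finset.range N \ D, qq ^ (s + (D.filter (fun j => s < j)).card - D.card)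
      = ∑ i ∈ Finset.range (N - D.card), qq ^ i := by
  have hcard : (Finset.range N \ D).card = N - D.card := by
    rw [Finset.card_sdiff_of_subset hD, Finset.card_range]
  rw [← hcard]
  apply sum_injOn_range (f := fun s => s + (D.filter (fun j => s < j)).card - D.card)
  · intro x hx y hy hxy
    simp only [Finset.mem_coe, Finset.mem_sdiff, mem_range] at hx hy
    have hxy' : x + (D.filter (fun j => x < j)).card - D.card
        = y + (D.filter (fun j => y < j)).card - D.card := hxy
    have hcx := filter_split_card' (D := D) hx.2
    have hcy := filter_split_card' (D := D) hy.2
    have hlx : (D.filter (fun j => j < x)).card ≤ x := card_filter_lt_le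
    have hly : (D.filter (fun j => j < y)).card ≤ y := card_filter_lt_le
    rcases lt_trichotomy x y with h | h | h
    · have := gS_diff hy.2 h
      omega
    · exact h
    · have := gS_diff hx.2 h
      omega
  · intro s hs
    rw [hcard]
    simp only [Finset.mem_sdiff, mem_range] at hs
    have h1 := gS_le_out hD s
    have h2 := filter_split_card' (D := D) hs.2
    have h3 : (D.filter (fun j => j < s)).card ≤ s := card_filter_lt_le
    omega

lemma qint_add (a b : ℕ) : qint (a + b) = qint a + qq ^ a * qint b := by
  induction b with
  | zero => simp [qint]
  | succ b ih =>
      rw [show a + (b + 1) = (a + b) + 1 from rfl]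
      rw [qint, Finset.sum_range_succ, ← qint, ih]
      rw [show qint (b + 1) = qint b + qq ^ b from by rw [qint, Finset.sum_range_succ, ← qint]]
      ring

def Eslot {n : ℕ} (τ : Equiv.Perm (Fin n)) (α β k : ℕ) (q : ℕ) : K :=
  if ((desSet τ).filter (fun j => j + 1 < q)).card +
      ((if q < n then 1 else 0) + ((desSet τ).filter (fun j => q ≤ j)).card) = k then
    qint α ^ (lrmin τ + (if q = 0 then 1 else 0) - 1) *
      qint β ^ (rlmin τ + (if q = n then 1 else 0) - 1) *
      qq ^ ((1 + (((desSet τ).filter (fun j => j + 1 < q)).card +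
          ((if q < n then 1 else 0) + ((desSet τ).filter (fun j => q ≤ j)).card)) -
          (lrmin τ + (if q = 0 then 1 else 0))) * (α - 1) +
        (n + 1 - (rlmin τ + (if q = n then 1 else 0))) * (β - 1) +
        ((∑ j ∈ (desSet τ).filter (fun j => j + 1 < q), (j + 1)) +
          ((if q < n then q + 1 else 0) + ∑ j ∈ (desSet τ).filter (fun j => q ≤ j), (j + 2))))
  else 0

lemma ins_term_eq {n : ℕ} (τ : Equiv.Perm (Fin n)) (α β k : ℕ) (p : Fin (n + 1)) :
    (if des (ins τ p) = k then
        qint α ^ (lrmin (ins τ p) - 1) * qint β ^ (rlmin (ins τ p) - 1) *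
          qq ^ (tmaj α β (ins τ p))
      else 0) = Eslot τ α β k (p : ℕ) := by
  simp only [Eslot, tmaj, des_ins, maj_ins, lrmin_ins, rlmin_ins]

lemma sum_add_two {D : Finset ℕ} : ∑ j ∈ D, (j + 2) = (∑ j ∈ D, (j + 1)) + D.card := by
  have : ∀ j, j + 2 = (j + 1) + 1 := fun j => rfl
  calc ∑ j ∈ D, (j + 2) = ∑ j ∈ D, ((j + 1) + 1) := rfl
    _ = (∑ j ∈ D, (j + 1)) + ∑ j ∈ D, 1 := Finset.sum_add_distrib
    _ = (∑ j ∈ D, (j + 1)) + D.card := by rw [Finset.sum_const, smul_eq_mul, mul_one]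

lemma Eslot_zero {n : ℕ} (τ : Equiv.Perm (Fin n)) (α β k : ℕ) (hn : 1 ≤ n) :
    Eslot τ α β k 0 = if (desSet τ).card + 1 = k then
      qint α ^ (lrmin τ) * qint β ^ (rlmin τ - 1) *
        qq ^ ((1 + (desSet τ).card - lrmin τ) * (α - 1) + (n - rlmin τ) * (β - 1) +
          (∑ j ∈ desSet τ, (j + 1)) + ((β - 1) + ((desSet τ).card + 1)))
    else 0 := by
  have hR : rlmin τ ≤ n := rlmin_le τ
  have e1 : (desSet τ).filter (fun j => j + 1 < 0) = ∅ :=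
    Finset.filter_false_of_mem (fun j _ => by omega)
  have e2 : (desSet τ).filter (fun j => (0:ℕ) ≤ j) = desSet τ :=
    Finset.filter_true_of_mem (fun j _ => by omega)
  have e3 : ¬ ((0:ℕ) = n) := by omega
  have t1 : (if (0:ℕ) < n then 1 else 0) = 1 := if_pos hn
  have t2 : (if (0:ℕ) = 0 then 1 else 0) = 1 := if_pos rfl
  have t3 : (if (0:ℕ) = n then 1 else 0) = 0 := if_neg e3
  unfold Eslot
  rw [e1, e2, t1, t2, t3, Finset.card_empty, Finset.sum_empty, sum_add_two]
  by_cases hc : (desSet τ).card + 1 = k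
  · rw [if_pos (by omega : 0 + (1 + (desSet τ).card) = k), if_pos hc]
    rw [show lrmin τ + 1 - 1 = lrmin τ from by omega,
      show rlmin τ + 0 - 1 = rlmin τ - 1 from by omega,
      show 1 + (0 + (1 + (desSet τ).card)) - (lrmin τ + 1)
        = 1 + (desSet τ).card - lrmin τ from by omega,
      show n + 1 - (rlmin τ + 0) = (n - rlmin τ) + 1 from by omega]
    congr 1
    ring
  · rw [if_neg (by omega : ¬ 0 + (1 + (desSet τ).card) = k), if_neg hc]

lemma Eslot_n {n : ℕ} (τ : Equiv.Perm (Fin n)) (α β k : ℕ) (hn : 1 ≤ n) :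
    Eslot τ α β k n = if (desSet τ).card = k then
      qint β * (qint α ^ (lrmin τ - 1) * qint β ^ (rlmin τ - 1) *
        qq ^ ((1 + (desSet τ).card - lrmin τ) * (α - 1) + (n - rlmin τ) * (β - 1) +
          (∑ j ∈ desSet τ, (j + 1))))
    else 0 := by
  have hR : rlmin τ ≤ n := rlmin_le τ
  have hR1 : 1 ≤ rlmin τ := rlmin_pos hn τ
  have e1 : (desSet τ).filter (fun j => j + 1 < n) = desSet τ :=
    Finset.filter_true_of_mem (fun j hj => by
      have := (mem_desSet τ j).mp hj; omega)
  have e2 : (desSet τ).filter (fun j => n ≤ j) = ∅ :=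
    Finset.filter_false_of_mem (fun j hj => by
      have := (mem_desSet τ j).mp hj; omega)
  have e3 : ¬ (n = 0) := by omega
  have t1 : (if n < n then 1 else 0) = 0 := if_neg (lt_irrefl n)
  have t2 : (if n = 0 then 1 else 0) = 0 := if_neg e3
  have t3 : (if n = n then 1 else 0) = 1 := if_pos rfl
  have t4 : (if n < n then n + 1 else 0) = 0 := if_neg (lt_irrefl n)
  unfold Eslot
  rw [e1, e2, t1, t2, t3, t4, Finset.card_empty, Finset.sum_empty]
  by_cases hc : (desSet τ).card = k
  · rw [if_pos (by omega : (desSet τ).card + (0 + 0) = k), if_pos hc]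
    rw [show rlmin τ + 1 - 1 = (rlmin τ - 1) + 1 from by omega,
      show lrmin τ + 0 - 1 = lrmin τ - 1 from by omega,
      show 1 + ((desSet τ).card + (0 + 0)) - (lrmin τ + 0)
        = 1 + (desSet τ).card - lrmin τ from by omega,
      show n + 1 - (rlmin τ + 1) = n - rlmin τ from by omega,
      pow_succ]
    rw [show (∑ j ∈ desSet τ, (j + 1)) + (0 + 0) = ∑ j ∈ desSet τ, (j + 1) from by omega]
    ring
  · rw [if_neg (by omega : ¬ (desSet τ).card + (0 + 0) = k), if_neg hc]

lemma Eslot_mem {n : ℕ} (τ : Equiv.Perm (Fin n)) (α β k : ℕ) (hβ : 1 ≤ β)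
    {s : ℕ} (hs : s ∈ desSet τ) :
    Eslot τ α β k (s + 1) = if (desSet τ).card = k then
      qint α ^ (lrmin τ - 1) * qint β ^ (rlmin τ - 1) *
        qq ^ ((1 + (desSet τ).card - lrmin τ) * (α - 1) + (n - rlmin τ) * (β - 1) +
          (∑ j ∈ desSet τ, (j + 1)) + (β + ((desSet τ).filter (fun j => s < j)).card))
    else 0 := by
  have hR : rlmin τ ≤ n := rlmin_le τ
  have hsn : s < n - 1 := ((mem_desSet τ s).mp hs).1
  have e1 : (desSet τ).filter (fun j => j + 1 < s + 1) = (desSet τ).filter (fun j => j < s) :=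
    Finset.filter_congr (fun x _ => by constructor <;> intro h <;> omega)
  have e2 : (desSet τ).filter (fun j => s + 1 ≤ j) = (desSet τ).filter (fun j => s < j) :=
    Finset.filter_congr (fun x _ => by constructor <;> intro h <;> omega)
  have t1 : (if s + 1 < n then 1 else 0) = 1 := if_pos (by omega)
  have t2 : (if s + 1 = 0 then 1 else 0) = 0 := if_neg (by omega)
  have t3 : (if s + 1 = n then 1 else 0) = 0 := if_neg (by omega)
  have t4 : (if s + 1 < n then s + 1 + 1 else 0) = s + 1 + 1 := if_pos (by omega)
  have hsplitc := filter_split_card (D := desSet τ) hs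
  have hsplitm := filter_split_sum (D := desSet τ) hs (fun j => j + 1)
  unfold Eslot
  rw [e1, e2, t1, t2, t3, t4, sum_add_two]
  by_cases hc : (desSet τ).card = k
  · rw [if_pos (by omega :
      ((desSet τ).filter (fun j => j < s)).card
        + (1 + ((desSet τ).filter (fun j => s < j)).card) = k), if_pos hc]
    rw [show lrmin τ + 0 - 1 = lrmin τ - 1 from by omega,
      show rlmin τ + 0 - 1 = rlmin τ - 1 from by omega,
      show 1 + (((desSet τ).filter (fun j => j < s)).card
        + (1 + ((desSet τ).filter (fun j => s < j)).card)) - (lrmin τ + 0)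
        = 1 + (desSet τ).card - lrmin τ from by omega,
      show n + 1 - (rlmin τ + 0) = (n - rlmin τ) + 1 from by omega]
    congr 1
    have hh : (∑ j ∈ (desSet τ).filter (fun j => j < s), (j + 1)) +
        (s + 1 + 1 + ((∑ j ∈ (desSet τ).filter (fun j => s < j), (j + 1))
          + ((desSet τ).filter (fun j => s < j)).card))
        = (∑ j ∈ desSet τ, (j + 1)) + (1 + ((desSet τ).filter (fun j => s < j)).card) := by
      omega
    rw [hh,
      show β + ((desSet τ).filter (fun j => s < j)).card
        = (β - 1) + (1 + ((desSet τ).filter (fun j => s < j)).card) from by omega]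
    ring
  · rw [if_neg (by omega : ¬ (((desSet τ).filter (fun j => j < s)).card
        + (1 + ((desSet τ).filter (fun j => s < j)).card) = k)), if_neg hc]

lemma Eslot_notmem {n : ℕ} (τ : Equiv.Perm (Fin n)) (α β k : ℕ) (hα : 1 ≤ α) (hβ : 1 ≤ β)
    {s : ℕ} (hsn : s < n - 1) (hs : s ∉ desSet τ) :
    Eslot τ α β k (s + 1) = if (desSet τ).card + 1 = k then
      qint α ^ (lrmin τ - 1) * qint β ^ (rlmin τ - 1) *
        qq ^ ((1 + (desSet τ).card - lrmin τ) * (α - 1) + (n - rlmin τ) * (β - 1) +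
          (∑ j ∈ desSet τ, (j + 1)) + ((α - 1) + (β - 1) + ((desSet τ).card + 2) +
            (s + ((desSet τ).filter (fun j => s < j)).card - (desSet τ).card)))
    else 0 := by
  have hR : rlmin τ ≤ n := rlmin_le τ
  have hL : lrmin τ ≤ des τ + 1 := lrmin_le_des_succ τ
  rw [des] at hL
  have e1 : (desSet τ).filter (fun j => j + 1 < s + 1) = (desSet τ).filter (fun j => j < s) :=
    Finset.filter_congr (fun x _ => by constructor <;> intro h <;> omega)
  have e2 : (desSet τ).filter (fun j => s + 1 ≤ j) = (desSet τ).filter (fun j => s < j) :=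
    Finset.filter_congr (fun x _ => by constructor <;> intro h <;> omega)
  have t1 : (if s + 1 < n then 1 else 0) = 1 := if_pos (by omega)
  have t2 : (if s + 1 = 0 then 1 else 0) = 0 := if_neg (by omega)
  have t3 : (if s + 1 = n then 1 else 0) = 0 := if_neg (by omega)
  have t4 : (if s + 1 < n then s + 1 + 1 else 0) = s + 1 + 1 := if_pos (by omega)
  have hsplitc := filter_split_card' (D := desSet τ) hs
  have hsplitm := filter_split_sum' (D := desSet τ) hs (fun j => j + 1)
  have hcle : ((desSet τ).filter (fun j => j < s)).card ≤ s := card_filter_lt_le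
  unfold Eslot
  rw [e1, e2, t1, t2, t3, t4, sum_add_two]
  by_cases hc : (desSet τ).card + 1 = k
  · rw [if_pos (by omega :
      ((desSet τ).filter (fun j => j < s)).card
        + (1 + ((desSet τ).filter (fun j => s < j)).card) = k), if_pos hc]
    rw [show lrmin τ + 0 - 1 = lrmin τ - 1 from by omega,
      show rlmin τ + 0 - 1 = rlmin τ - 1 from by omega,
      show 1 + (((desSet τ).filter (fun j => j < s)).card
        + (1 + ((desSet τ).filter (fun j => s < j)).card)) - (lrmin τ + 0)
        = (1 + (desSet τ).card - lrmin τ) + 1 from by omega,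
      show n + 1 - (rlmin τ + 0) = (n - rlmin τ) + 1 from by omega]
    congr 1
    have hh : (∑ j ∈ (desSet τ).filter (fun j => j < s), (j + 1)) +
        (s + 1 + 1 + ((∑ j ∈ (desSet τ).filter (fun j => s < j), (j + 1))
          + ((desSet τ).filter (fun j => s < j)).card))
        = (∑ j ∈ desSet τ, (j + 1)) + (((desSet τ).card + 2) +
            (s + ((desSet τ).filter (fun j => s < j)).card - (desSet τ).card)) := by
      omega
    rw [hh]
    ring
  · rw [if_neg (by omega : ¬ (((desSet τ).filter (fun j => j < s)).card
        + (1 + ((desSet τ).filter (fun j => s < j)).card) = k)), if_neg hc]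

lemma slot_sum {n : ℕ} (hn : 1 ≤ n) (α β k : ℕ) (hα : 1 ≤ α) (hβ : 1 ≤ β)
    (τ : Equiv.Perm (Fin n)) :
    (∑ p : Fin (n + 1), if des (ins τ p) = k then
        qint α ^ (lrmin (ins τ p) - 1) * qint β ^ (rlmin (ins τ p) - 1) *
          qq ^ (tmaj α β (ins τ p))
      else 0)
    = (if des τ = k then qint (k + β) *
          (qint α ^ (lrmin τ - 1) * qint β ^ (rlmin τ - 1) * qq ^ (tmaj α β τ)) else 0)
      + (if k ≠ 0 ∧ des τ = k - 1 then qq ^ (β + k - 1) * qint (n - k + α) *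
          (qint α ^ (lrmin τ - 1) * qint β ^ (rlmin τ - 1) * qq ^ (tmaj α β τ)) else 0) := by
  have hL1 : 1 ≤ lrmin τ := lrmin_pos hn τ
  have hdes : (desSet τ).card ≤ n - 1 := by
    have := des_le τ; rw [des] at this; exact this
  have step1 : (∑ p : Fin (n + 1), if des (ins τ p) = k then
        qint α ^ (lrmin (ins τ p) - 1) * qint β ^ (rlmin (ins τ p) - 1) *
          qq ^ (tmaj α β (ins τ p))
      else 0) = ∑ q ∈ Finset.range (n + 1), Eslot τ α β k q := by
    rw [← Fin.sum_univ_eq_sum_range (fun q => Eslot τ α β k q) (n + 1)]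
    exact Finset.sum_congr rfl (fun p _ => ins_term_eq τ α β k p)
  rw [step1]
  have hrange : Finset.range (n + 1)
      = insert 0 (insert n ((Finset.range (n - 1)).image (fun s => s + 1))) := by
    ext q
    simp only [mem_range, Finset.mem_insert, mem_image]
    constructor
    · intro hq
      rcases Nat.eq_zero_or_pos q with rfl | hq0
      · exact Or.inl rfl
      · rcases eq_or_ne q n with rfl | hqn
        · exact Or.inr (Or.inl rfl)
        · exact Or.inr (Or.inr ⟨q - 1, by omega, by omega⟩)
    · rintro (rfl | rfl | ⟨s, hs, rfl⟩) <;> omega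
  have h0notin : (0:ℕ) ∉ insert n ((Finset.range (n - 1)).image (fun s => s + 1)) := by
    simp only [Finset.mem_insert, mem_image, mem_range]
    rintro (h | ⟨s, hs1, hs2⟩) <;> omega
  have hnnotin : n ∉ (Finset.range (n - 1)).image (fun s => s + 1) := by
    simp only [mem_image, mem_range]
    rintro ⟨s, hs1, hs2⟩
    omega
  rw [hrange, Finset.sum_insert h0notin, Finset.sum_insert hnnotin,
    Finset.sum_image (fun a _ b _ h => by omega : ∀ a ∈ Finset.range (n-1),
      ∀ b ∈ Finset.range (n-1), a + 1 = b + 1 → a = b),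
    ← Finset.sum_sdiff (desSet_subset τ)]
  rw [Eslot_zero τ α β k hn, Eslot_n τ α β k hn]
  rw [show des τ = (desSet τ).card from rfl]
  simp only [tmaj, des, maj]
  generalize hE : (1 + (desSet τ).card - lrmin τ) * (α - 1) + (n - rlmin τ) * (β - 1) +
      (∑ j ∈ desSet τ, (j + 1)) = E
  by_cases hdk : (desSet τ).card = k
  · -- preserving case
    have hD : (∑ s ∈ desSet τ, Eslot τ α β k (s + 1))
        = (qint α ^ (lrmin τ - 1) * qint β ^ (rlmin τ - 1) * qq ^ E * qq ^ β) * qint k := by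
      calc (∑ s ∈ desSet τ, Eslot τ α β k (s + 1))
          = ∑ s ∈ desSet τ, (qint α ^ (lrmin τ - 1) * qint β ^ (rlmin τ - 1) * qq ^ E * qq ^ β) *
              qq ^ (((desSet τ).filter (fun j => s < j)).card) := by
            apply Finset.sum_congr rfl
            intro s hs
            rw [Eslot_mem τ α β k hβ hs, if_pos hdk, hE, pow_add, pow_add]
            ring
        _ = (qint α ^ (lrmin τ - 1) * qint β ^ (rlmin τ - 1) * qq ^ E * qq ^ β) *
              ∑ s ∈ desSet τ, qq ^ (((desSet τ).filter (fun j => s < j)).card) :=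
            (Finset.mul_sum _ _ _).symm
        _ = _ := by rw [sum_D_pow, ← qint, hdk]
    have hA : (∑ s ∈ Finset.range (n - 1) \ desSet τ, Eslot τ α β k (s + 1)) = 0 := by
      apply Finset.sum_eq_zero
      intro s hs
      have hs' := Finset.mem_sdiff.mp hs
      rw [Eslot_notmem τ α β k hα hβ (Finset.mem_range.mp hs'.1) hs'.2,
        if_neg (by omega : ¬ ((desSet τ).card + 1 = k))]
    rw [hD, hA, if_neg (by omega : ¬ ((desSet τ).card + 1 = k)), if_pos hdk, if_pos hdk,
      if_neg (by omega : ¬ (k ≠ 0 ∧ (desSet τ).card = k - 1)),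
      show qint (k + β) = qint β + qq ^ β * qint k from by rw [Nat.add_comm, qint_add]]
    ring
  · by_cases hdk1 : (desSet τ).card + 1 = k
    · -- ascending case
      have hD : (∑ s ∈ desSet τ, Eslot τ α β k (s + 1)) = 0 := by
        apply Finset.sum_eq_zero
        intro s hs
        rw [Eslot_mem τ α β k hβ hs, if_neg hdk]
      have hA : (∑ s ∈ Finset.range (n - 1) \ desSet τ, Eslot τ α β k (s + 1))
          = (qint α ^ (lrmin τ - 1) * qint β ^ (rlmin τ - 1) * qq ^ E *
              (qq ^ (β + k - 1) * qq ^ α)) * qint (n - k) := by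
        calc (∑ s ∈ Finset.range (n - 1) \ desSet τ, Eslot τ α β k (s + 1))
            = ∑ s ∈ Finset.range (n - 1) \ desSet τ,
                (qint α ^ (lrmin τ - 1) * qint β ^ (rlmin τ - 1) * qq ^ E *
                  (qq ^ (β + k - 1) * qq ^ α)) *
                  qq ^ (s + ((desSet τ).filter (fun j => s < j)).card - (desSet τ).card) := by
              apply Finset.sum_congr rfl
              intro s hs
              have hs' := Finset.mem_sdiff.mp hs
              rw [Eslot_notmem τ α β k hα hβ (Finset.mem_range.mp hs'.1) hs'.2, if_pos hdk1,
                show (α - 1) + (β - 1) + ((desSet τ).card + 2)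
                  = (β + k - 1) + α from by omega, hE, pow_add, pow_add, pow_add]
              ring
          _ = (qint α ^ (lrmin τ - 1) * qint β ^ (rlmin τ - 1) * qq ^ E *
                (qq ^ (β + k - 1) * qq ^ α)) *
                ∑ s ∈ Finset.range (n - 1) \ desSet τ,
                  qq ^ (s + ((desSet τ).filter (fun j => s < j)).card - (desSet τ).card) :=
              (Finset.mul_sum _ _ _).symm
          _ = _ := by
              rw [sum_notD_pow (desSet_subset τ), ← qint,
                show n - 1 - (desSet τ).card = n - k from by omega]
      rw [hD, hA, if_pos hdk1, if_neg hdk, if_neg hdk,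
        if_pos (by omega : k ≠ 0 ∧ (desSet τ).card = k - 1),
        show (β - 1) + ((desSet τ).card + 1) = β + k - 1 from by omega,
        show qint (n - k + α) = qint α + qq ^ α * qint (n - k) from by
          rw [Nat.add_comm, qint_add],
        show qint α ^ lrmin τ = qint α ^ (lrmin τ - 1) * qint α from by
          conv_lhs => rw [show lrmin τ = (lrmin τ - 1) + 1 from by omega]
          rw [pow_succ],
        pow_add]
      ring
    · -- neither
      have hD : (∑ s ∈ desSet τ, Eslot τ α β k (s + 1)) = 0 := by
        apply Finset.sum_eq_zero
        intro s hs
        rw [Eslot_mem τ α β k hβ hs, if_neg hdk]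
      have hA : (∑ s ∈ Finset.range (n - 1) \ desSet τ, Eslot τ α β k (s + 1)) = 0 := by
        apply Finset.sum_eq_zero
        intro s hs
        have hs' := Finset.mem_sdiff.mp hs
        rw [Eslot_notmem τ α β k hα hβ (Finset.mem_range.mp hs'.1) hs'.2, if_neg hdk1]
      rw [hD, hA, if_neg hdk1, if_neg hdk, if_neg hdk,
        if_neg (by omega : ¬ (k ≠ 0 ∧ (desSet τ).card = k - 1))]
      simp

theorem Ehat_recurrence (α β n k : ℕ) (hα : 1 ≤ α) (hβ : 1 ≤ β) (hn : 1 ≤ n)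
    (hk : k ≤ n) :
    Ehat α β n k =
      qq ^ (β + k - 1) * qint (n - k + α) *
        (if k = 0 then 0 else Ehat α β (n - 1) (k - 1)) +
      qint (k + β) * Ehat α β (n - 1) k := by
  obtain ⟨m, rfl⟩ : ∃ m, n = m + 1 := ⟨n - 1, by omega⟩
  have hm1 : (1:ℕ) ≤ m + 1 := by omega
  simp only [Nat.add_sub_cancel]
  conv_lhs => rw [Ehat, Finset.sum_filter]
  rw [sum_perm_split (fun σ => if des σ = k then
      qint α ^ (lrmin σ - 1) * qint β ^ (rlmin σ - 1) * qq ^ (tmaj α β σ) else 0)]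
  rw [Finset.sum_congr rfl (fun τ _ => slot_sum hm1 α β k hα hβ τ)]
  rw [Finset.sum_add_distrib]
  have h1 : (∑ τ : Equiv.Perm (Fin (m + 1)), if des τ = k then qint (k + β) *
        (qint α ^ (lrmin τ - 1) * qint β ^ (rlmin τ - 1) * qq ^ (tmaj α β τ)) else 0)
      = qint (k + β) * Ehat α β m k := by
    calc (∑ τ : Equiv.Perm (Fin (m + 1)), if des τ = k then qint (k + β) *
          (qint α ^ (lrmin τ - 1) * qint β ^ (rlmin τ - 1) * qq ^ (tmaj α β τ)) else 0)
        = ∑ τ : Equiv.Perm (Fin (m + 1)), qint (k + β) * (if des τ = k then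
            qint α ^ (lrmin τ - 1) * qint β ^ (rlmin τ - 1) * qq ^ (tmaj α β τ) else 0) := by
          apply Finset.sum_congr rfl
          intro τ _
          split_ifs <;> ring
      _ = qint (k + β) * ∑ τ : Equiv.Perm (Fin (m + 1)), (if des τ = k then
            qint α ^ (lrmin τ - 1) * qint β ^ (rlmin τ - 1) * qq ^ (tmaj α β τ) else 0) :=
          (Finset.mul_sum _ _ _).symm
      _ = qint (k + β) * Ehat α β m k := by
          congr 1
          rw [Ehat, Finset.sum_filter]
  have h2 : (∑ τ : Equiv.Perm (Fin (m + 1)), if k ≠ 0 ∧ des τ = k - 1 then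
        qq ^ (β + k - 1) * qint (m + 1 - k + α) *
          (qint α ^ (lrmin τ - 1) * qint β ^ (rlmin τ - 1) * qq ^ (tmaj α β τ)) else 0)
      = qq ^ (β + k - 1) * qint (m + 1 - k + α) *
          (if k = 0 then 0 else Ehat α β m (k - 1)) := by
    by_cases hk0 : k = 0
    · rw [if_pos hk0, mul_zero]
      apply Finset.sum_eq_zero
      intro τ _
      rw [if_neg (by tauto)]
    · rw [if_neg hk0]
      calc (∑ τ : Equiv.Perm (Fin (m + 1)), if k ≠ 0 ∧ des τ = k - 1 then
            qq ^ (β + k - 1) * qint (m + 1 - k + α) *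
              (qint α ^ (lrmin τ - 1) * qint β ^ (rlmin τ - 1) * qq ^ (tmaj α β τ)) else 0)
          = ∑ τ : Equiv.Perm (Fin (m + 1)), qq ^ (β + k - 1) * qint (m + 1 - k + α) *
              (if des τ = k - 1 then
                qint α ^ (lrmin τ - 1) * qint β ^ (rlmin τ - 1) * qq ^ (tmaj α β τ) else 0) := by
            apply Finset.sum_congr rfl
            intro τ _
            by_cases hd : des τ = k - 1
            · rw [if_pos ⟨hk0, hd⟩, if_pos hd]
            · rw [if_neg (by tauto), if_neg hd, mul_zero]
        _ = qq ^ (β + k - 1) * qint (m + 1 - k + α) *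
              ∑ τ : Equiv.Perm (Fin (m + 1)), (if des τ = k - 1 then
                qint α ^ (lrmin τ - 1) * qint β ^ (rlmin τ - 1) * qq ^ (tmaj α β τ) else 0) :=
            (Finset.mul_sum _ _ _).symm
        _ = _ := by
            congr 1
            rw [Ehat, Finset.sum_filter]
  rw [h1, h2, add_comm]

end
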